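/- Let D ⊆ ℝ^d be a closed convex polyhedron (a finite intersection of closed halfspaces) and ε > 0. Then there exists an open convex set D′ that is a finite intersection of open halfspaces such that D ⊆ D′ ⊆ B(D, ε), where B(D, ε) = {u : inf_{x∈D} ‖u − x‖ < ε}. -/

import Mathlib

open scoped InnerProductSpace Topology
open Filter

/-- Key quantitative lemma: for a nonempty polyhedron described by inner-product
inequalities in Euclidean space, relaxing all constraints by a small `δ` keeps points
within (Euclidean) distance `ε` of the polyhedron. -/
lemma stmt7_key {d m : ℕ} (a : Fin m → EuclideanSpace ℝ (Fin d)) (b : Fin m → ℝ)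
    (ε : ℝ) (hε : 0 < ε)
    (hne : Set.Nonempty {x : EuclideanSpace ℝ (Fin d) | ∀ j, ⟪a j, x⟫_ℝ ≤ b j}) :
    ∃ δ > 0, ∀ x : EuclideanSpace ℝ (Fin d), (∀ j, ⟪a j, x⟫_ℝ ≤ b j + δ) →
      ∃ y, (∀ j, ⟪a j, y⟫_ℝ ≤ b j) ∧ ‖x - y‖ < ε := by
  classical
  set D : Set (EuclideanSpace ℝ (Fin d)) := {x | ∀ j, ⟪a j, x⟫_ℝ ≤ b j} with hDdef
  have hconvD : Convex ℝ D := by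
    intro p hp q hq s t hs ht hst j
    have h1 : ⟪a j, s • p + t • q⟫_ℝ = s * ⟪a j, p⟫_ℝ + t * ⟪a j, q⟫_ℝ := by
      rw [inner_add_right, real_inner_smul_right, real_inner_smul_right]
    rw [h1]
    have h2 := mul_le_mul_of_nonneg_left (hp j) hs
    have h3 := mul_le_mul_of_nonneg_left (hq j) ht
    have h4 : s * b j + t * b j = b j := by rw [← add_mul, hst, one_mul]
    linarith
  have hclosedD : IsClosed D := by
    have : D = ⋂ j, {x : EuclideanSpace ℝ (Fin d) | ⟪a j, x⟫_ℝ ≤ b j} := by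
      ext x; simp [hDdef]
    rw [this]
    exact isClosed_iInter fun j =>
      isClosed_le (Continuous.inner continuous_const continuous_id) continuous_const
  by_contra hcon
  push_neg at hcon
  have hcon' : ∀ n : ℕ, ∃ x : EuclideanSpace ℝ (Fin d),
      (∀ j, ⟪a j, x⟫_ℝ ≤ b j + 1 / (n + 1)) ∧
      ∀ y, (∀ j, ⟪a j, y⟫_ℝ ≤ b j) → ε ≤ ‖x - y‖ := by
    intro n
    exact hcon (1 / (n + 1)) (by positivity)
  choose x hx1 hx2 using hcon'
  have hproj : ∀ n : ℕ, ∃ y ∈ D, ‖x n - y‖ = ⨅ w : D, ‖x n - w‖ := fun n =>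
    exists_norm_eq_iInf_of_complete_convex hne hclosedD.isComplete hconvD (x n)
  choose y hyD hyeq using hproj
  set r : ℕ → ℝ := fun n => ‖x n - y n‖ with hrdef
  have hrε : ∀ n, ε ≤ r n := fun n => hx2 n (y n) (hyD n)
  have hr0 : ∀ n, 0 < r n := fun n => lt_of_lt_of_le hε (hrε n)
  set uh : ℕ → EuclideanSpace ℝ (Fin d) := fun n => (r n)⁻¹ • (x n - y n) with huhdef
  have huh1 : ∀ n, ‖uh n‖ = 1 := by
    intro n
    rw [huhdef]
    simp only [norm_smul, norm_inv, Real.norm_eq_abs, abs_of_pos (hr0 n)]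
    exact inv_mul_cancel₀ (ne_of_gt (hr0 n))
  -- active sets
  set I : ℕ → Finset (Fin m) := fun n =>
    Finset.univ.filter (fun j => b j ≤ ⟪a j, y n⟫_ℝ) with hIdef
  obtain ⟨I0, hI0⟩ : ∃ I0 : Finset (Fin m), {n | I n = I0}.Infinite := by
    obtain ⟨I0, hI0⟩ := Finite.exists_infinite_fiber I
    refine ⟨I0, ?_⟩
    rw [← Set.infinite_coe_iff]
    convert hI0 using 2
    rfl
  set ψ : ℕ → ℕ := Nat.nth (fun n => I n = I0) with hψdef
  have hψmono : StrictMono ψ := Nat.nth_strictMono hI0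
  have hψmem : ∀ n, I (ψ n) = I0 := fun n => Nat.nth_mem_of_infinite hI0 n
  obtain ⟨u, humem, φ, hφmono, huconv⟩ :=
    (isCompact_sphere (0 : EuclideanSpace ℝ (Fin d)) 1).tendsto_subseq
      (x := fun n => uh (ψ n)) (fun n => by
        rw [mem_sphere_zero_iff_norm]; exact huh1 (ψ n))
  set χ : ℕ → ℕ := fun n => ψ (φ n) with hχdef
  have hχmono : StrictMono χ := hψmono.comp hφmono
  have hχle : ∀ n, n ≤ χ n := fun n => hχmono.le_apply
  have hIχ : ∀ n, I (χ n) = I0 := fun n => hψmem (φ n)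
  have hunorm : ‖u‖ = 1 := mem_sphere_zero_iff_norm.mp humem
  have huχconv : Tendsto (fun n => uh (χ n)) atTop (𝓝 u) := huconv
  -- active membership characterization
  have hactive : ∀ n j, j ∈ I0 ↔ b j ≤ ⟪a j, y (χ n)⟫_ℝ := by
    intro n j
    rw [← hIχ n, hIdef]
    simp
  -- Step A : limit direction leaves active constraints nonincreasing
  have stepA : ∀ j ∈ I0, ⟪a j, u⟫_ℝ ≤ 0 := by
    intro j hj
    have hbound : ∀ n : ℕ, ⟪a j, uh (χ n)⟫_ℝ ≤ ε⁻¹ * (1 / (n + 1)) := by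
      intro n
      have hact : b j ≤ ⟪a j, y (χ n)⟫_ℝ := (hactive n j).mp hj
      have h1 : ⟪a j, x (χ n) - y (χ n)⟫_ℝ ≤ 1 / ((χ n : ℝ) + 1) := by
        rw [inner_sub_right]
        have := hx1 (χ n) j
        linarith
      have h2 : ⟪a j, uh (χ n)⟫_ℝ = (r (χ n))⁻¹ * ⟪a j, x (χ n) - y (χ n)⟫_ℝ := by
        rw [huhdef, real_inner_smul_right]
      rw [h2]
      calc (r (χ n))⁻¹ * ⟪a j, x (χ n) - y (χ n)⟫_ℝ
          ≤ (r (χ n))⁻¹ * (1 / ((χ n : ℝ) + 1)) :=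
            mul_le_mul_of_nonneg_left h1 (inv_nonneg.mpr (hr0 (χ n)).le)
        _ ≤ ε⁻¹ * (1 / ((n : ℝ) + 1)) := by
            have ha : (r (χ n))⁻¹ ≤ ε⁻¹ := by
              apply inv_anti₀ hε (hrε (χ n))
            have hb : (1 : ℝ) / ((χ n : ℝ) + 1) ≤ 1 / ((n : ℝ) + 1) := by
              apply one_div_le_one_div_of_le (by positivity)
              have : (n : ℝ) ≤ (χ n : ℝ) := by exact_mod_cast hχle n
              linarith
            have hc : (0 : ℝ) < 1 / ((χ n : ℝ) + 1) := by positivity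
            exact mul_le_mul ha hb hc.le (inv_nonneg.mpr hε.le)
    have hc : Tendsto (fun n : ℕ => ε⁻¹ * (1 / ((n : ℝ) + 1))) atTop (𝓝 0) := by
      have := tendsto_one_div_add_atTop_nhds_zero_nat.const_mul ε⁻¹
      simpa using this
    have hf : Tendsto (fun n => ⟪a j, uh (χ n)⟫_ℝ) atTop (𝓝 ⟪a j, u⟫_ℝ) :=
      Filter.Tendsto.inner tendsto_const_nhds huχconv
    exact le_of_tendsto_of_tendsto' hf hc hbound
  -- Step B : from each projection point we can move a bit along u and stay in D
  have stepB : ∀ n : ℕ, ∃ t : ℝ, 0 < t ∧ (y (χ n) + t • u) ∈ D := by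
    intro n
    have h1 : ∀ᶠ t in nhdsWithin (0 : ℝ) (Set.Ioi 0),
        ∀ j, ⟪a j, y (χ n) + t • u⟫_ℝ ≤ b j := by
      rw [eventually_all]
      intro j
      have hform : ∀ t : ℝ, ⟪a j, y (χ n) + t • u⟫_ℝ = ⟪a j, y (χ n)⟫_ℝ + t * ⟪a j, u⟫_ℝ := by
        intro t
        rw [inner_add_right, real_inner_smul_right]
      by_cases hj : j ∈ I0
      · have hju : ⟪a j, u⟫_ℝ ≤ 0 := stepA j hj
        have hyb : ⟪a j, y (χ n)⟫_ℝ ≤ b j := hyD (χ n) j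
        filter_upwards [self_mem_nhdsWithin] with t ht
        rw [hform t]
        have : t * ⟪a j, u⟫_ℝ ≤ 0 :=
          mul_nonpos_of_nonneg_of_nonpos (le_of_lt ht) hju
        linarith
      · have hstrict : ⟪a j, y (χ n)⟫_ℝ < b j :=
          lt_of_not_ge (fun h => hj ((hactive n j).mpr h))
        have hcont : Tendsto (fun t : ℝ => ⟪a j, y (χ n)⟫_ℝ + t * ⟪a j, u⟫_ℝ)
            (nhdsWithin (0 : ℝ) (Set.Ioi 0)) (𝓝 (⟪a j, y (χ n)⟫_ℝ)) := by
          have hc : Continuous (fun t : ℝ => ⟪a j, y (χ n)⟫_ℝ + t * ⟪a j, u⟫_ℝ) :=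
            continuous_const.add (continuous_id.mul continuous_const)
          have := (hc.tendsto 0).mono_left (nhdsWithin_le_nhds (s := Set.Ioi (0:ℝ)))
          simpa using this
        have := hcont.eventually_lt_const hstrict
        filter_upwards [this] with t ht
        rw [hform t]
        exact ht.le
    obtain ⟨t, ht1, ht2⟩ := (h1.and self_mem_nhdsWithin).exists
    exact ⟨t, ht2, fun j => ht1 j⟩
  -- Step C : inner products of the unit directions with u are nonpositive
  have stepC : ∀ n : ℕ, ⟪uh (χ n), u⟫_ℝ ≤ 0 := by
    intro n
    obtain ⟨t, htpos, hmem⟩ := stepB n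
    have hchar := (norm_eq_iInf_iff_real_inner_le_zero hconvD (hyD (χ n))).mp (hyeq (χ n))
    have h1 := hchar _ hmem
    rw [add_sub_cancel_left, real_inner_smul_right] at h1
    have h2 : ⟪x (χ n) - y (χ n), u⟫_ℝ ≤ 0 := by nlinarith
    have h3 : ⟪uh (χ n), u⟫_ℝ = (r (χ n))⁻¹ * ⟪x (χ n) - y (χ n), u⟫_ℝ := by
      rw [huhdef, real_inner_smul_left]
    rw [h3]
    exact mul_nonpos_of_nonneg_of_nonpos (inv_nonneg.mpr (hr0 (χ n)).le) h2
  -- Step D : contradiction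
  have hlim : Tendsto (fun n => ⟪uh (χ n), u⟫_ℝ) atTop (𝓝 ⟪u, u⟫_ℝ) :=
    Filter.Tendsto.inner huχconv tendsto_const_nhds
  have h1 : ⟪u, u⟫_ℝ ≤ 0 := le_of_tendsto' hlim stepC
  rw [real_inner_self_eq_norm_mul_norm, hunorm] at h1
  linarith

/-- Any closed convex polyhedron `D` can be enclosed in an open set `D′` that is a
finite intersection of open halfspaces, with `D ⊆ D′ ⊆ B(D, ε)`. -/
theorem stmt7 {d : ℕ} (D : Set (Fin d → ℝ))
    (m : ℕ) (a : Fin m → (Fin d → ℝ)) (b : Fin m → ℝ)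
    (hD : D = {x | ∀ j, (∑ i, a j i * x i) ≤ b j})
    (ε : ℝ) (hε : 0 < ε) :
    ∃ (m' : ℕ) (a' : Fin m' → (Fin d → ℝ)) (b' : Fin m' → ℝ),
      D ⊆ {x | ∀ j, (∑ i, a' j i * x i) < b' j} ∧
      {x | ∀ j, (∑ i, a' j i * x i) < b' j} ⊆ {u | Metric.infDist u D < ε} := by
  classical
  by_cases hne : D.Nonempty
  · -- the polyhedron is nonempty: use the key lemma
    let aE : Fin m → EuclideanSpace ℝ (Fin d) := fun j => (WithLp.equiv 2 (Fin d → ℝ)).symm (a j)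
    have hinner : ∀ (j : Fin m) (x : EuclideanSpace ℝ (Fin d)),
        ⟪aE j, x⟫_ℝ = ∑ i, a j i * x i := by
      intro j x
      rw [PiLp.inner_apply]
      refine Finset.sum_congr rfl fun i _ => ?_
      simp [aE, RCLike.inner_apply, mul_comm]
    have hne' : Set.Nonempty {x : EuclideanSpace ℝ (Fin d) | ∀ j, ⟪aE j, x⟫_ℝ ≤ b j} := by
      obtain ⟨x0, hx0⟩ := hne
      rw [hD] at hx0
      exact ⟨(WithLp.equiv 2 (Fin d → ℝ)).symm x0, fun j => by rw [hinner]; exact hx0 j⟩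
    obtain ⟨δ, hδ, hkey⟩ := stmt7_key aE b ε hε hne'
    refine ⟨m, a, fun j => b j + δ, ?_, ?_⟩
    · intro z hz j
      rw [hD] at hz
      have := hz j
      show ∑ i : Fin d, a j i * z i < b j + δ
      linarith
    · intro z hz
      obtain ⟨yE, hyE, hzy⟩ := hkey ((WithLp.equiv 2 (Fin d → ℝ)).symm z)
        (fun j => by rw [hinner]; exact (hz j).le)
      have hyD : (WithLp.equiv 2 (Fin d → ℝ)) yE ∈ D := by
        rw [hD]
        intro j
        have := hyE j
        rw [hinner] at this
        exact this
      refine lt_of_le_of_lt (Metric.infDist_le_dist_of_mem hyD) ?_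
      refine lt_of_le_of_lt ?_ hzy
      rw [dist_pi_le_iff (norm_nonneg _)]
      intro i
      set v : EuclideanSpace ℝ (Fin d) := (WithLp.equiv 2 (Fin d → ℝ)).symm z - yE with hvdef
      have hcomp : dist (z i) ((WithLp.equiv 2 (Fin d → ℝ)) yE i) = |v i| := by
        rw [Real.dist_eq]
        rfl
      rw [hcomp, EuclideanSpace.norm_eq]
      rw [← Real.sqrt_sq_eq_abs]
      apply Real.sqrt_le_sqrt
      have : |v i| ^ 2 ≤ ∑ k, ‖v k‖ ^ 2 := by
        have hsingle : ‖v i‖ ^ 2 ≤ ∑ k, ‖v k‖ ^ 2 :=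
          Finset.single_le_sum (f := fun k => ‖v k‖ ^ 2)
            (fun k _ => sq_nonneg _) (Finset.mem_univ i)
        simpa [Real.norm_eq_abs, sq_abs] using hsingle
      simpa [Real.norm_eq_abs, sq_abs] using this
  · -- the polyhedron is empty: use a single infeasible open halfspace
    have hDempty : D = ∅ := Set.not_nonempty_iff_eq_empty.mp hne
    refine ⟨1, fun _ => 0, fun _ => 0, ?_, ?_⟩
    · rw [hDempty]; exact Set.empty_subset _
    · intro z hz
      exfalso
      have := hz 0
      simp at this
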